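/- arXiv:1911.03542 — 2 statements merged into one kernel-verified Lean document; each statement's English description precedes it below -/
import Mathlib

section
/- Let p_1 > p_2 > ... > p_k be the elements of the PSS closure P_{i−1} in descending order, and let m be such that p_m = pss(i). Let ℓ_x = lce(p_x, i) be the length of the longest common prefix of suffixes S_{p_x} and S_i. Then ℓ_1 ≤ ℓ_2 ≤ ... ≤ ℓ_{m−1} and ℓ_m ≥ ℓ_{m+1} ≥ ... ≥ ℓ_k (the LCE values are bitonic with peak at m−1 or m). -/
variable {α : Type*} [LinearOrder α]

/-- A Lyndon word: nonempty and strictly smaller than all of its proper nonempty suffixes. -/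
def IsLyndon (s : List α) : Prop :=
  s ≠ [] ∧ ∀ i, 0 < i → i < s.length → List.Lex (· < ·) s (s.drop i)

/-- The `i`-th suffix of `S` (1-indexed); `sfx S 0 = []` plays the role of the sentinel
suffix `S₀ = $`, and `sfx S (n+1) = []` plays the role of `S_{n+1} = $`
(the empty list is lexicographically smaller than every nonempty list). -/
def sfx (S : List α) (i : ℕ) : List α := if i = 0 then [] else S.drop (i - 1)

open scoped Classical in
/-- `pss S j = max {k ∈ [0,j) : S_k ≺ S_j}`. -/
noncomputable def pss (S : List α) (j : ℕ) : ℕ :=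
  Nat.findGreatest (fun k => List.Lex (· < ·) (sfx S k) (sfx S j)) (j - 1)

/-- `nss S i = min {j ∈ (i, n+1] : S_j ≺ S_i}`. -/
noncomputable def nss (S : List α) (i : ℕ) : ℕ :=
  sInf {j | i < j ∧ j ≤ S.length + 1 ∧ List.Lex (· < ·) (sfx S j) (sfx S i)}

/-- Length of the longest common prefix of two lists. -/
def lcp : List α → List α → ℕ
  | a :: s, b :: t => if a = b then lcp s t + 1 else 0
  | _, _ => 0

/-- The PSS closure: all iterates of `pss` starting from `j`. -/
noncomputable def pssClosure (S : List α) (j : ℕ) : Set ℕ :=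
  {k | ∃ m, (pss S)^[m] j = k}

open scoped Classical in
/-- Size of the subtree of node `i` in the PSS tree of `S`. -/
noncomputable def subtreeSize (S : List α) (i : ℕ) : ℕ :=
  ((Finset.range (S.length + 1)).filter
    (fun j => j = i ∨ ∃ m, 0 < m ∧ (pss S)^[m] j = i)).card

open scoped Classical in
/-- `lam S i`: length of the longest Lyndon word starting at position `i` (1-indexed). -/
noncomputable def lam (S : List α) (i : ℕ) : ℕ :=
  Nat.findGreatest (fun ℓ => IsLyndon ((S.drop (i - 1)).take ℓ)) (S.length + 1 - i)

section Aux

variable {α : Type*} [LinearOrder α]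

private theorem lcp_comm (A B : List α) : lcp A B = lcp B A := by
  induction A generalizing B with
  | nil => cases B <;> simp [lcp]
  | cons a s ih =>
    cases B with
    | nil => simp [lcp]
    | cons b t =>
      simp only [lcp]
      rcases eq_or_ne a b with h | h
      · subst h; simp [ih]
      · simp [h, h.symm]

private theorem lcp_le_of_lex : ∀ {A B C : List α}, List.Lex (· < ·) A B →
    List.Lex (· < ·) B C → lcp A C ≤ lcp A B ∧ lcp A C ≤ lcp B C := by
  intro A
  induction A with
  | nil => intro B C _ _; simp [lcp]
  | cons a s ih =>
    intro B C h1 h2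
    cases C with
    | nil => exact absurd h2 (fun h => nomatch h)
    | cons c t =>
      cases B with
      | nil => exact absurd h1 (fun h => nomatch h)
      | cons b u =>
        by_cases hac : a = c
        · subst hac
          cases h1 with
          | cons h1' =>
            cases h2 with
            | cons h2' =>
              obtain ⟨k1, k2⟩ := ih h1' h2'
              simp only [lcp, if_pos rfl]
              exact ⟨Nat.succ_le_succ k1, Nat.succ_le_succ k2⟩
            | rel hr => exact absurd hr (lt_irrefl _)
          | rel hr =>
            cases h2 with
            | cons h2' => exact absurd hr (lt_irrefl _)
            | rel hr2 => exact absurd (hr.trans hr2) (lt_irrefl _)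
        · simp [lcp, hac]

private theorem sfx_ne_nil {S : List α} {j : ℕ} (hj1 : 1 ≤ j) (hj2 : j ≤ S.length) :
    sfx S j ≠ [] := by
  simp only [sfx, if_neg (by omega : j ≠ 0)]
  intro h
  have := congrArg List.length h
  simp only [List.length_drop, List.length_nil] at this
  omega

private theorem lex_zero {S : List α} {j : ℕ} (hj1 : 1 ≤ j) (hj2 : j ≤ S.length) :
    List.Lex (· < ·) (sfx S 0) (sfx S j) := by
  have h0 : sfx S 0 = [] := by simp [sfx]
  cases hsj : sfx S j with
  | nil => exact absurd hsj (sfx_ne_nil hj1 hj2)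
  | cons a l => exact List.Lex.nil

private theorem pss_lt {S : List α} {j : ℕ} (hj : 1 ≤ j) : pss S j < j :=
  lt_of_le_of_lt (Nat.findGreatest_le _) (by omega)

private theorem pss_le (S : List α) (j : ℕ) : pss S j ≤ j :=
  le_trans (Nat.findGreatest_le _) (by omega)

private theorem pss_zero (S : List α) : pss S 0 = 0 := by
  simp [pss]

private theorem pss_lex {S : List α} {j : ℕ} (hj1 : 1 ≤ j) (hj2 : j ≤ S.length) :
    List.Lex (· < ·) (sfx S (pss S j)) (sfx S j) := by
  classical
  unfold pss
  exact Nat.findGreatest_spec (P := fun k => List.Lex (· < ·) (sfx S k) (sfx S j))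
    (Nat.zero_le _) (lex_zero hj1 hj2)

private theorem iterate_pss_le (S : List α) : ∀ (d x : ℕ), (pss S)^[d] x ≤ x := by
  intro d
  induction d with
  | zero => simp
  | succ d ih =>
    intro x
    rw [Function.iterate_succ_apply']
    exact le_trans (pss_le _ _) (ih x)

private theorem iterate_lex {S : List α} : ∀ {d j : ℕ}, 1 ≤ j → j ≤ S.length → 1 ≤ d →
    List.Lex (· < ·) (sfx S ((pss S)^[d] j)) (sfx S j) := by
  intro d
  induction d with
  | zero => omega
  | succ d ih =>
    intro j hj1 hj2 _
    rw [Function.iterate_succ_apply]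
    rcases Nat.eq_zero_or_pos d with rfl | hd'
    · simpa using pss_lex hj1 hj2
    rcases Nat.eq_zero_or_pos (pss S j) with h0 | h0
    · rw [h0, Function.iterate_fixed (pss_zero S)]
      exact lex_zero hj1 hj2
    · exact List.lex_trans (fun h h' => lt_trans h h') (ih h0 (le_trans (le_of_lt (pss_lt hj1)) hj2) hd') (pss_lex hj1 hj2)

private theorem closure_le {S : List α} {j a : ℕ} (ha : a ∈ pssClosure S j) : a ≤ j := by
  obtain ⟨d, rfl⟩ := ha
  exact iterate_pss_le S d j

private theorem closure_lex {S : List α} {j : ℕ} (hj : j ≤ S.length) {a b : ℕ}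
    (ha : a ∈ pssClosure S j) (hb : b ∈ pssClosure S j) (hab : b < a) :
    List.Lex (· < ·) (sfx S b) (sfx S a) := by
  obtain ⟨s, rfl⟩ := ha
  obtain ⟨t, rfl⟩ := hb
  have anti : ∀ u v : ℕ, u ≤ v → (pss S)^[v] j ≤ (pss S)^[u] j := by
    intro u v huv
    have : (pss S)^[v] j = (pss S)^[v - u] ((pss S)^[u] j) := by
      rw [← Function.iterate_add_apply]
      congr 1
      omega
    rw [this]
    exact iterate_pss_le S _ _
  have hst : s < t := by
    by_contra hc
    have := anti t s (by omega)
    omega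
  have heq : (pss S)^[t] j = (pss S)^[t - s] ((pss S)^[s] j) := by
    rw [← Function.iterate_add_apply]
    congr 1
    omega
  rw [heq]
  exact iterate_lex (by omega) (le_trans (iterate_pss_le S s j) hj) (by omega)

end Aux

/-- bitonicity of the LCE values along the PSS closure.
`p 0 > p 1 > ⋯ > p (k-1)` enumerates `P_{i−1}` in descending order, `p m = pss i`;
then `ℓ` is nondecreasing before `m` and nonincreasing from `m` on, where
`ℓ x = lce (p x) i = lcp S_{p x} S_i`. -/
theorem stmt5 (S : List α) (i : ℕ) (h1 : 1 ≤ i) (h2 : i ≤ S.length)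
    (k : ℕ) (p : Fin k → ℕ) (hanti : StrictAnti p)
    (hrange : Set.range p = pssClosure S (i - 1))
    (m : Fin k) (hm : p m = pss S i) :
    (∀ x y : Fin k, x ≤ y → (y : ℕ) < (m : ℕ) →
        lcp (sfx S (p x)) (sfx S i) ≤ lcp (sfx S (p y)) (sfx S i)) ∧
    (∀ x y : Fin k, m ≤ x → x ≤ y →
        lcp (sfx S (p y)) (sfx S i) ≤ lcp (sfx S (p x)) (sfx S i)) := by
    classical
  have hclos : ∀ x : Fin k, p x ∈ pssClosure S (i - 1) := fun x => by
    rw [← hrange]; exact Set.mem_range_self x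
  have hple : ∀ x : Fin k, p x ≤ i - 1 := fun x => closure_le (hclos x)
  have hlen : i - 1 ≤ S.length := by omega
  have hpm : List.Lex (· < ·) (sfx S (p m)) (sfx S i) := by
    rw [hm]; exact pss_lex h1 h2
  constructor
  · intro x y hxy hym
    rcases lt_or_eq_of_le hxy with hxy' | rfl
    · have hymf : y < m := hym
      have hpy_gt : pss S i < p y := by
        have := hanti hymf
        omega
      have hny : ¬ List.Lex (· < ·) (sfx S (p y)) (sfx S i) :=
        Nat.findGreatest_is_greatest hpy_gt (hple y)
      have hne : sfx S (p y) ≠ sfx S i := by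
        intro h
        have := congrArg List.length h
        have hy1 : 1 ≤ p y := by omega
        have hyi : p y ≤ i - 1 := hple y
        simp only [sfx, if_neg (by omega : p y ≠ 0), if_neg (by omega : i ≠ 0),
          List.length_drop] at this
        omega
      have hy_lex : List.Lex (· < ·) (sfx S i) (sfx S (p y)) := by
        haveI : IsTrichotomous α (· < ·) := ⟨fun a b h h' => le_antisymm (not_lt.1 h') (not_lt.1 h)⟩
        rcases trichotomous_of (List.Lex (· < ·)) (sfx S (p y)) (sfx S i) with h | h | h
        · exact absurd h hny
        · exact absurd h hne
        · exact h
      have hxylex : List.Lex (· < ·) (sfx S (p y)) (sfx S (p x)) :=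
        closure_lex hlen (hclos x) (hclos y) (hanti hxy')
      have := (lcp_le_of_lex hy_lex hxylex).1
      rwa [lcp_comm (sfx S (p x)), lcp_comm (sfx S (p y))]
    · exact le_refl _
  · intro x y hmx hxy
    have hx_lex : List.Lex (· < ·) (sfx S (p x)) (sfx S i) := by
      rcases lt_or_eq_of_le hmx with h | rfl
      · exact List.lex_trans (fun h h' => lt_trans h h') (closure_lex hlen (hclos m) (hclos x) (hanti h)) hpm
      · exact hpm
    rcases lt_or_eq_of_le hxy with h | rfl
    · have hyx : List.Lex (· < ·) (sfx S (p y)) (sfx S (p x)) :=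
        closure_lex hlen (hclos x) (hclos y) (hanti h)
      exact (lcp_le_of_lex hyx hx_lex).2
    · exact le_refl _
end

section
/- Uniqueness of the Lyndon factorization: every non-empty string S admits exactly one decomposition S = s_1·s_2·…·s_m into non-empty factors such that every s_i is a Lyndon word and s_1 ⪰ s_2 ⪰ … ⪰ s_m (lexicographically non-increasing). -/
variable {α : Type*} [LinearOrder α]

section CFLAux

private lemma lex_iff_lt (a b : List α) : List.Lex (· < ·) a b ↔ a < b := Iff.rfl

private lemma lex_trans' {a b c : List α} (h1 : List.Lex (· < ·) a b)
    (h2 : List.Lex (· < ·) b c) : List.Lex (· < ·) a c :=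
  lt_trans (show a < b from h1) (show b < c from h2)

private lemma lex_irrefl' {a : List α} (h : List.Lex (· < ·) a a) : False :=
  lt_irrefl a (show a < a from h)

private lemma lex_append_nonempty (a : List α) {c : List α} (hc : c ≠ []) :
    List.Lex (· < ·) a (a ++ c) := by
  induction a with
  | nil =>
    cases c with
    | nil => exact absurd rfl hc
    | cons h t => exact List.Lex.nil
  | cons x t ih => exact List.Lex.cons ih

private lemma lex_of_prefix {a b : List α} (h : a <+: b) (hne : a ≠ b) :
    List.Lex (· < ·) a b := by
  obtain ⟨c, rfl⟩ := h
  cases c with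
  | nil => simp at hne
  | cons h t => exact lex_append_nonempty a (by simp)

private lemma lex_of_prefix' {a b : List α} (h : a <+: b) : a = b ∨ List.Lex (· < ·) a b := by
  by_cases hne : a = b
  · exact Or.inl hne
  · exact Or.inr (lex_of_prefix h hne)

private lemma lex_append_of_not_prefix {a b : List α} (h : List.Lex (· < ·) a b)
    (hp : ¬ a <+: b) : ∀ s t : List α, List.Lex (· < ·) (a ++ s) (b ++ t) := by
  induction h with
  | nil => exact absurd (List.nil_prefix) hp
  | @cons x l1 l2 h ih =>
    intro s t
    exact List.Lex.cons (ih (fun hpre => hp (by simp [List.cons_prefix_cons, hpre])) s t)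
  | rel h => exact fun s t => List.Lex.rel h

private lemma IsLyndon.append {a b : List α} (ha : IsLyndon a) (hb : IsLyndon b)
    (hab : List.Lex (· < ·) a b) : IsLyndon (a ++ b) := by
  have hane : a ≠ [] := ha.1
  have hbne : b ≠ [] := hb.1
  have halen : 0 < a.length := List.length_pos_iff.mpr hane
  have hblen : 0 < b.length := List.length_pos_iff.mpr hbne
  have key : List.Lex (· < ·) (a ++ b) b := by
    by_cases hp : a <+: b
    · obtain ⟨c, rfl⟩ := hp
      have hc : c ≠ [] := by
        rintro rfl
        simp only [List.append_nil] at hab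
        exact lex_irrefl' hab
      have hcd : (a ++ c).drop a.length = c := by
        rw [show a.length = a.length + 0 from rfl, List.drop_append]
        simp
      have h2 : List.Lex (· < ·) (a ++ c) c := by
        have := hb.2 a.length halen (by simp [List.length_pos_iff.mpr hc])
        rwa [hcd] at this
      exact List.Lex.append_left _ h2 a
    · have := lex_append_of_not_prefix hab hp b []
      simpa using this
  refine ⟨by simp [hane], fun i hi hilen => ?_⟩
  simp only [List.length_append] at hilen
  rcases lt_trichotomy i a.length with h | h | h
  · have hdrop : (a ++ b).drop i = a.drop i ++ b := List.drop_append_of_le_length h.le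
    have h1 : List.Lex (· < ·) a (a.drop i) := ha.2 i hi h
    have hnp : ¬ a <+: a.drop i := fun hp =>
      absurd hp.length_le (by simp; omega)
    have := lex_append_of_not_prefix h1 hnp b b
    rwa [hdrop]
  · have hdrop : (a ++ b).drop i = b := by
      subst h
      rw [show a.length = a.length + 0 from rfl, List.drop_append]
      simp
    rwa [hdrop]
  · have hdrop : (a ++ b).drop i = b.drop (i - a.length) := by
      rw [show i = a.length + (i - a.length) by omega, List.drop_append]
      rw [List.drop_eq_nil_of_le (by omega), List.nil_append]
    have h1 : List.Lex (· < ·) b (b.drop (i - a.length)) := hb.2 _ (by omega) (by omega)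
    rw [hdrop]
    exact lex_trans' key h1

private lemma singleton_lyndon (x : α) : IsLyndon [x] :=
  ⟨by simp, fun i hi hlen => by simp at hlen; omega⟩

private lemma exists_break {β : Type*} {R : β → β → Prop} :
    ∀ L : List β, ¬ L.Chain' R → ∃ L1 a b L2, L = L1 ++ a :: b :: L2 ∧ ¬ R a b := by
  intro L hL
  induction L with
  | nil => exact absurd List.isChain_nil hL
  | cons a t ih =>
    cases t with
    | nil => exact absurd (List.isChain_singleton a) hL
    | cons b t2 =>
      simp only [List.Chain', List.isChain_cons_cons] at hL
      push_neg at hL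
      by_cases hab : R a b
      · obtain ⟨L1, x, y, L2, heq, hxy⟩ := ih (hL hab)
        exact ⟨a :: L1, x, y, L2, by simp [heq], hxy⟩
      · exact ⟨[], a, b, t2, rfl, hab⟩

private lemma exists_fact : ∀ (n : ℕ) (L : List (List α)), L.length ≤ n →
    (∀ w ∈ L, IsLyndon w) →
    ∃ L' : List (List α), L'.flatten = L.flatten ∧ (∀ w ∈ L', IsLyndon w) ∧
      L'.Chain' (fun a b => ¬ List.Lex (· < ·) a b) := by
  intro n
  induction n with
  | zero =>
    intro L hlen _
    have : L = [] := List.length_eq_zero_iff.mp (Nat.le_zero.mp hlen)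
    exact ⟨[], by simp [this], by simp, List.isChain_nil⟩
  | succ m ih =>
    intro L hlen hLy
    by_cases hc : L.Chain' (fun a b => ¬ List.Lex (· < ·) a b)
    · exact ⟨L, rfl, hLy, hc⟩
    · obtain ⟨L1, a, b, L2, rfl, hab⟩ := exists_break L hc
      push_neg at hab
      have haL : IsLyndon a := hLy a (by simp)
      have hbL : IsLyndon b := hLy b (by simp)
      have habL : IsLyndon (a ++ b) := haL.append hbL hab
      have hlen' : (L1 ++ (a ++ b) :: L2).length ≤ m := by
        simp only [List.length_append, List.length_cons] at hlen ⊢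
        omega
      have hLy' : ∀ w ∈ L1 ++ (a ++ b) :: L2, IsLyndon w := by
        intro w hw
        simp only [List.mem_append, List.mem_cons] at hw
        rcases hw with h | h | h
        · exact hLy w (by simp [h])
        · exact h ▸ habL
        · exact hLy w (by simp [h])
      obtain ⟨L', h1, h2, h3⟩ := ih _ hlen' hLy'
      refine ⟨L', ?_, h2, h3⟩
      rw [h1]
      simp [List.flatten_append, List.append_assoc]

private lemma lemB : ∀ (V : List (List α)) (u v1 : List α) (k : ℕ),
    IsLyndon u → List.Lex (· < ·) v1 u →
    (∀ w ∈ V, ¬ List.Lex (· < ·) v1 w ∧ w ≠ []) →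
    0 < k → k < u.length → u.drop k <+: V.flatten → False := by
  intro V
  induction V with
  | nil =>
    intro u v1 k _ _ _ hk hklen hpre
    have h1 : u.drop k = [] := List.prefix_nil.mp (by simpa using hpre)
    rw [List.drop_eq_nil_iff] at h1
    omega
  | cons w V' ih =>
    intro u v1 k hu hvu hV hk hklen hpre
    have hw : ¬ List.Lex (· < ·) v1 w := (hV w (by simp)).1
    have hwne : w ≠ [] := (hV w (by simp)).2
    have hdropne : u.drop k ≠ [] := by
      rw [ne_eq, List.drop_eq_nil_iff]; omega
    have hdroplen : (u.drop k).length = u.length - k := List.length_drop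
    have hu_lt : List.Lex (· < ·) u (u.drop k) := hu.2 k hk hklen
    have hv1_lt : List.Lex (· < ·) v1 (u.drop k) := lex_trans' hvu hu_lt
    simp only [List.flatten_cons] at hpre
    by_cases hle : (u.drop k).length ≤ w.length
    · have hdw : u.drop k <+: w :=
        List.prefix_of_prefix_length_le hpre (List.prefix_append w V'.flatten) hle
      rcases lex_of_prefix' hdw with heq | hlex
      · exact hw (heq ▸ hv1_lt)
      · exact hw (lex_trans' hv1_lt hlex)
    · push_neg at hle
      have hwd : w <+: u.drop k :=
        List.prefix_of_prefix_length_le (List.prefix_append w V'.flatten) hpre hle.le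
      obtain ⟨rest, hrest⟩ := hwd
      have hrestpre : rest <+: V'.flatten := by
        rw [← hrest] at hpre
        exact (List.prefix_append_right_inj w).mp hpre
      have hrestd : rest = u.drop (k + w.length) := by
        have := congrArg (List.drop w.length) hrest
        rwa [List.drop_drop, List.drop_left' rfl] at this
      by_cases hrn : rest = []
      · rw [hrn, List.append_nil] at hrest
        exact hw (hrest ▸ hv1_lt)
      · have hkw : k + w.length < u.length := by
          by_contra hge
          exact hrn (hrestd.trans (List.drop_eq_nil_of_le (by omega)))
        exact ih u v1 (k + w.length) hu hvu (fun x hx => hV x (by simp [hx]))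
          (by omega) hkw (hrestd ▸ hrestpre)

private lemma chain_head (v : List α) (V : List (List α))
    (hc : (v :: V).Chain' (fun a b => ¬ List.Lex (· < ·) a b)) :
    ∀ w ∈ V, ¬ List.Lex (· < ·) v w := by
  haveI : IsTrans (List α) (fun a b : List α => ¬ List.Lex (· < ·) a b) := by
    constructor
    intro a b c hab hbc
    rw [lex_iff_lt, not_lt] at *
    exact le_trans hbc hab
  simp only [List.Chain', List.isChain_iff_pairwise] at hc
  exact (List.pairwise_cons.mp hc).1

private lemma head_len_le {S : List α} (u v : List α) (U V : List (List α))
    (h1 : (u :: U).flatten = S) (hLy1 : ∀ w ∈ u :: U, IsLyndon w)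
    (h2 : (v :: V).flatten = S) (hLy2 : ∀ w ∈ v :: V, IsLyndon w)
    (hc2 : (v :: V).Chain' (fun a b => ¬ List.Lex (· < ·) a b)) :
    u.length ≤ v.length := by
  by_contra hlt
  push_neg at hlt
  have hu : IsLyndon u := hLy1 u (by simp)
  have hv : IsLyndon v := hLy2 v (by simp)
  have hupre : u <+: S := h1 ▸ (by simp [List.flatten_cons])
  have hvpre : v <+: S := h2 ▸ (by simp [List.flatten_cons])
  have hvu : v <+: u := List.prefix_of_prefix_length_le hvpre hupre hlt.le
  have hvne : v ≠ u := fun h => by rw [h] at hlt; omega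
  have hlex : List.Lex (· < ·) v u := lex_of_prefix hvu hvne
  obtain ⟨c, hc⟩ := hvu
  have hcd : c = u.drop v.length := by
    have := congrArg (List.drop v.length) hc
    rwa [List.drop_left' rfl] at this
  have hcpre : c <+: V.flatten := by
    have : u <+: v ++ V.flatten := by rw [← List.flatten_cons, h2]; exact hupre
    rw [← hc] at this
    exact (List.prefix_append_right_inj v).mp this
  exact lemB V u v v.length hu hlex
    (fun w hw => ⟨chain_head v V hc2 w hw, (hLy2 w (by simp [hw])).1⟩)
    (List.length_pos_iff.mpr hv.1) hlt (hcd ▸ hcpre)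

private lemma uniq : ∀ (n : ℕ) (S : List α), S.length ≤ n →
    ∀ L1 L2 : List (List α),
    (L1.flatten = S ∧ (∀ w ∈ L1, IsLyndon w) ∧
      L1.Chain' (fun a b => ¬ List.Lex (· < ·) a b)) →
    (L2.flatten = S ∧ (∀ w ∈ L2, IsLyndon w) ∧
      L2.Chain' (fun a b => ¬ List.Lex (· < ·) a b)) →
    L1 = L2 := by
  intro n
  induction n with
  | zero =>
    intro S hS L1 L2 ⟨hf1, hLy1, _⟩ ⟨hf2, hLy2, _⟩
    have hSe : S = [] := List.length_eq_zero_iff.mp (Nat.le_zero.mp hS)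
    subst hSe
    have e1 : L1 = [] := by
      cases L1 with
      | nil => rfl
      | cons w t =>
        exact absurd (List.flatten_eq_nil_iff.mp hf1 w (by simp)) (hLy1 w (by simp)).1
    have e2 : L2 = [] := by
      cases L2 with
      | nil => rfl
      | cons w t =>
        exact absurd (List.flatten_eq_nil_iff.mp hf2 w (by simp)) (hLy2 w (by simp)).1
    rw [e1, e2]
  | succ m ih =>
    intro S hS L1 L2 ⟨hf1, hLy1, hc1⟩ ⟨hf2, hLy2, hc2⟩
    cases L1 with
    | nil =>
      cases L2 with
      | nil => rfl
      | cons v V =>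
        simp at hf1
        rw [hf1] at hf2
        exact absurd (List.flatten_eq_nil_iff.mp hf2 v (by simp)) (hLy2 v (by simp)).1
    | cons u U =>
      cases L2 with
      | nil =>
        simp at hf2
        rw [hf2] at hf1
        exact absurd (List.flatten_eq_nil_iff.mp hf1 u (by simp)) (hLy1 u (by simp)).1
      | cons v V =>
        have hle1 := head_len_le u v U V hf1 hLy1 hf2 hLy2 hc2
        have hle2 := head_len_le v u V U hf2 hLy2 hf1 hLy1 hc1
        have hupre : u <+: S := hf1 ▸ (by simp [List.flatten_cons])
        have hvpre : v <+: S := hf2 ▸ (by simp [List.flatten_cons])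
        have huv : u = v :=
          List.IsPrefix.eq_of_length
            (List.prefix_of_prefix_length_le hupre hvpre hle1) (le_antisymm hle1 hle2)
        subst huv
        have hfe : U.flatten = V.flatten := by
          rw [List.flatten_cons] at hf1 hf2
          exact List.append_cancel_left (hf1.trans hf2.symm)
        have hTlen : U.flatten.length ≤ m := by
          have h1 : u.length + U.flatten.length = S.length := by
            rw [← hf1]; simp
          have h2 : 0 < u.length := List.length_pos_iff.mpr (hLy1 u (by simp)).1
          omega
        have := ih U.flatten hTlen U V
          ⟨rfl, fun w hw => hLy1 w (by simp [hw]), hc1.tail⟩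
          ⟨hfe.symm, fun w hw => hLy2 w (by simp [hw]), hc2.tail⟩
        rw [this]

end CFLAux

/-- Chen–Fox–Lyndon: every non-empty string has a unique factorization into
a lexicographically non-increasing sequence of Lyndon words. -/
theorem stmt15 (S : List α) (hS : S ≠ []) :
    ∃! L : List (List α),
      L.flatten = S ∧ (∀ w ∈ L, IsLyndon w) ∧
        L.Chain' (fun a b => ¬ List.Lex (· < ·) a b) := by
  obtain ⟨L, hf, hLy, hc⟩ := exists_fact (S.map (fun a => [a])).length
    (S.map (fun a => [a])) le_rfl (by
      intro w hw
      simp only [List.mem_map] at hw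
      obtain ⟨a, _, rfl⟩ := hw
      exact singleton_lyndon a)
  have hfl' : ∀ T : List α, (T.map (fun a => [a])).flatten = T := by
    intro T; induction T with
    | nil => rfl
    | cons a t iht => simp [iht]
  have hfl := hfl' S
  refine ⟨L, ⟨hf.trans hfl, hLy, hc⟩, ?_⟩
  intro L' ⟨hf', hLy', hc'⟩
  exact uniq S.length S le_rfl L' L ⟨hf', hLy', hc'⟩ ⟨hf.trans hfl, hLy, hc⟩
end
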